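/- Let α, β, γ : {1,…,27} → ℝ be weights with Σᵢ αⁱ = Σᵢ βⁱ = Σᵢ γⁱ = 1 and βⁱ ≠ 0, γⁱ ≠ 0 for all i. For every point x ∈ ℝ¹³⁵ = (ℝ⁵)²⁷, there exist real numbers λ¹, …, λ²⁷, λ²⁸, λ²⁹ such that the Lagrange 1-form Σᵢ αⁱ dGᵢ + Σᵢ λⁱ ωᵢ + λ²⁸ Σᵢ βⁱ dEᵢ + λ²⁹ Σᵢ γⁱ dQᵢ vanishes at x (as a linear functional on ℝ¹³⁵) if and only if the quantity (αⁱ/βⁱ) Iᵢ(x) is the same for all i = 1,…,27 and the quantity (αⁱ/γⁱ) Pᵢ(x) is the same for all i = 1,…,27. -/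
import Mathlib


/- The product economy ℝ¹³⁵ = (ℝ⁵)²⁷ is modeled as `Fin 27 → Fin 5 → ℝ`;
   within each factor, index 0 = G, 1 = I, 2 = E, 3 = P, 4 = Q. -/

/-- Gibbs–Pfaff covector of the `i`-th economy at the point `x`:
`ωᵢ = dGᵢ − Iᵢ(x) dEᵢ + Pᵢ(x) dQᵢ`, a linear functional on ℝ¹³⁵. -/
noncomputable def ω (x : Fin 27 → Fin 5 → ℝ) (i : Fin 27) :
    (Fin 27 → Fin 5 → ℝ) → ℝ :=
  fun v => v i 0 - x i 1 * v i 2 + x i 3 * v i 4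

/-- Adjusted balance: given weights `α, β, γ : Fin 27 → ℝ` summing to `1`, with
`βⁱ ≠ 0` and `γⁱ ≠ 0` for all `i`, for every `x ∈ ℝ¹³⁵` there exist multipliers
`λ¹, …, λ²⁷, λ²⁸, λ²⁹` making the Lagrange 1-form
`Σᵢ αⁱ dGᵢ + Σᵢ λⁱ ωᵢ + λ²⁸ Σᵢ βⁱ dEᵢ + λ²⁹ Σᵢ γⁱ dQᵢ` vanish at `x` if and
only if `(αⁱ/βⁱ) Iᵢ(x)` is the same for all `i` and `(αⁱ/γⁱ) Pᵢ(x)` is the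
same for all `i`. -/
theorem eu_adjusted_balance (α β γ : Fin 27 → ℝ)
    (hα : ∑ i, α i = 1) (hβ : ∑ i, β i = 1) (hγ : ∑ i, γ i = 1)
    (hβ0 : ∀ i, β i ≠ 0) (hγ0 : ∀ i, γ i ≠ 0)
    (x : Fin 27 → Fin 5 → ℝ) :
    (∃ (lam : Fin 27 → ℝ) (lam28 lam29 : ℝ), ∀ v : Fin 27 → Fin 5 → ℝ,
        (∑ i, α i * v i 0) + (∑ i, lam i * ω x i v)
          + lam28 * (∑ i, β i * v i 2) + lam29 * (∑ i, γ i * v i 4) = 0) ↔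
    ((∀ i j : Fin 27, α i / β i * x i 1 = α j / β j * x j 1) ∧
      (∀ i j : Fin 27, α i / γ i * x i 3 = α j / γ j * x j 3)) := by
  constructor
  · rintro ⟨lam, lam28, lam29, h⟩
    have hG : ∀ i : Fin 27, α i + lam i = 0 := by
      intro i
      have := h (fun j l => if j = i ∧ l = 0 then 1 else 0)
      simpa [ω, mul_ite, Finset.sum_ite_eq'] using this
    have hE : ∀ i : Fin 27, -(lam i * x i 1) + lam28 * β i = 0 := by
      intro i
      have := h (fun j l => if j = i ∧ l = 2 then 1 else 0)
      simpa [ω, mul_ite, Finset.sum_ite_eq', Finset.mul_sum] using this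
    have hQ : ∀ i : Fin 27, lam i * x i 3 + lam29 * γ i = 0 := by
      intro i
      have := h (fun j l => if j = i ∧ l = 4 then 1 else 0)
      simpa [ω, mul_ite, Finset.sum_ite_eq', Finset.mul_sum] using this
    have hI : ∀ i : Fin 27, α i / β i * x i 1 = -lam28 := by
      intro i
      have h1 := hG i
      have h2 := hE i
      rw [div_mul_eq_mul_div, div_eq_iff (hβ0 i)]
      linear_combination h2 + x i 1 * h1
    have hP : ∀ i : Fin 27, α i / γ i * x i 3 = lam29 := by
      intro i
      have h1 := hG i
      have h2 := hQ i
      rw [div_mul_eq_mul_div, div_eq_iff (hγ0 i)]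
      linear_combination -h2 + x i 3 * h1
    exact ⟨fun i j => by rw [hI i, hI j], fun i j => by rw [hP i, hP j]⟩
  · rintro ⟨hI, hP⟩
    refine ⟨fun i => -α i, -(α 0 / β 0 * x 0 1), α 0 / γ 0 * x 0 3, fun v => ?_⟩
    have hA : ∀ i : Fin 27, α i * x i 1 = α 0 / β 0 * x 0 1 * β i := by
      intro i
      have h := hI i 0
      rw [div_mul_eq_mul_div, div_mul_eq_mul_div, div_eq_div_iff (hβ0 i) (hβ0 0)] at h
      rw [div_mul_eq_mul_div, div_mul_eq_mul_div, eq_div_iff (hβ0 0)]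
      linear_combination h
    have hB : ∀ i : Fin 27, α i * x i 3 = α 0 / γ 0 * x 0 3 * γ i := by
      intro i
      have h := hP i 0
      rw [div_mul_eq_mul_div, div_mul_eq_mul_div, div_eq_div_iff (hγ0 i) (hγ0 0)] at h
      rw [div_mul_eq_mul_div, div_mul_eq_mul_div, eq_div_iff (hγ0 0)]
      linear_combination h
    rw [Finset.mul_sum, Finset.mul_sum, ← Finset.sum_add_distrib,
      ← Finset.sum_add_distrib, ← Finset.sum_add_distrib]
    refine Finset.sum_eq_zero fun i _ => ?_
    simp only [ω]
    linear_combination (v i 2) * hA i - (v i 4) * hB i
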